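/- If the language L(A) of a Büchi automaton A is nonempty, then A accepts some ultimately periodic word, i.e. some word of the form ρσ^ω with ρ, σ finite words and σ nonempty. -/

import Mathlib

/-- A Büchi automaton over alphabet `A`: a finite state set (`Fin n`), a
transition relation, initial states and recurrence states. -/
structure Buchi (A : Type) where
  n : ℕ
  trans : Fin n → A → Fin n → Prop
  start : Set (Fin n)
  recur : Set (Fin n)

/-- Acceptance of an infinite word by a Büchi automaton: there is a run from
an initial state visiting recurrence states infinitely often. -/
def Buchi.Accepts {A : Type} (B : Buchi A) (w : ℕ → A) : Prop :=
  ∃ ρ : ℕ → Fin B.n, ρ 0 ∈ B.start ∧ (∀ i, B.trans (ρ i) (w i) (ρ (i + 1))) ∧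
    ∀ N, ∃ i, N ≤ i ∧ ρ i ∈ B.recur

/-- The language of a Büchi automaton. -/
def Buchi.lang {A : Type} (B : Buchi A) : Set (ℕ → A) := {w | B.Accepts w}

/-- The infinite word `ρ σ^ω` determined by a finite prefix `ρ` and a nonempty
finite period `σ`. -/
def extendPer {α : Type} (ρ σ : List α) (hσ : σ ≠ []) : ℕ → α := fun i =>
  if h : i < ρ.length then ρ.get ⟨i, h⟩
  else σ.get ⟨(i - ρ.length) % σ.length, Nat.mod_lt _ (List.length_pos_iff.mpr hσ)⟩

/-- An infinite word is ultimately periodic if it equals `ρ σ^ω` for finite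
words `ρ, σ` with `σ` nonempty. -/
def UltPeriodic {α : Type} (w : ℕ → α) : Prop :=
  ∃ (ρ σ : List α) (hσ : σ ≠ []), w = extendPer ρ σ hσ

/-- if the language of a Büchi automaton (over a finite nonempty
alphabet) is nonempty, it accepts an ultimately periodic word. -/
theorem buchi_nonempty_accepts_ultimately_periodic (A : Type) [Fintype A]
    [Nonempty A] (B : Buchi A) (h : B.lang.Nonempty) :
    ∃ w ∈ B.lang, UltPeriodic w := by
  obtain ⟨w, ρ, h0, htr, hrec⟩ := h
  -- choose a strictly monotone sequence of recurrence indices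
  choose c hc1 hc2 using hrec
  let idx : ℕ → ℕ := fun k => (fun m => c (m + 1))^[k] (c 0)
  have hidx0 : idx 0 = c 0 := rfl
  have hidxs : ∀ k, idx (k + 1) = c (idx k + 1) := fun k =>
    Function.iterate_succ_apply' _ _ _
  have hidx_rec : ∀ k, ρ (idx k) ∈ B.recur := by
    intro k; cases k with
    | zero => rw [hidx0]; exact hc2 0
    | succ m => rw [hidxs]; exact hc2 _
  have hidx_mono : StrictMono idx := by
    apply strictMono_nat_of_lt_succ
    intro k
    rw [hidxs]
    have := hc1 (idx k + 1)
    exact lt_of_lt_of_le (Nat.lt_succ_self _) this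
  -- pigeonhole: two equal recurrence states
  obtain ⟨x, y, hxy, heq⟩ := Finite.exists_ne_map_eq_of_infinite (fun k => ρ (idx k))
  wlog hlt : x < y generalizing x y
  · exact this y x hxy.symm heq.symm (by omega)
  set i := idx x with hi
  set j := idx y with hj
  have hij : i < j := hidx_mono hlt
  have hρij : ρ i = ρ j := heq
  have hirec : ρ i ∈ B.recur := hidx_rec x
  set p := j - i with hp
  have hppos : 0 < p := by omega
  have hjip : j = i + p := by omega
  -- the ultimately periodic word and run
  set w' : ℕ → A := fun n : ℕ => if n < i then w n else w (i + (n - i) % p) with hw'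
  set ρ' : ℕ → Fin B.n := fun n : ℕ => if n < i then ρ n else ρ (i + (n - i) % p) with hρ'
  have key : ∀ r, r < p → ρ (i + (r + 1) % p) = ρ (i + r + 1) := by
    intro r hr
    rcases Nat.lt_or_ge (r + 1) p with h1 | h1
    · rw [Nat.mod_eq_of_lt h1]; ring_nf
    · have : r + 1 = p := by omega
      rw [this, Nat.mod_self, Nat.add_zero, hρij, hjip]
      congr 1; omega
  have hρeq : ∀ n, ρ' (n + 1) = ρ (i + ((n + 1 - i) % p)) ∨ (n + 1 < i ∧ ρ' (n+1) = ρ (n+1)) := by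
    intro n
    by_cases hni : n + 1 < i
    · right; exact ⟨hni, by simp [hρ', hni]⟩
    · left; simp [hρ', hni]
  refine ⟨w', ⟨ρ', ?_, ?_, ?_⟩, ?_⟩
  · -- start
    by_cases h0i : 0 < i
    · simpa [hρ', h0i] using h0
    · have : i = 0 := by omega
      simp [hρ', this, h0]
  · -- transitions
    intro n
    by_cases hn : n < i
    · have hρn : ρ' n = ρ n := by simp [hρ', hn]
      have hwn : w' n = w n := by simp [hw', hn]
      have hρn1 : ρ' (n + 1) = ρ (n + 1) := by
        by_cases hn1 : n + 1 < i
        · simp [hρ', hn1]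
        · have : n + 1 = i := by omega
          simp [hρ', this, Nat.sub_self]
      rw [hρn, hwn, hρn1]; exact htr n
    · push_neg at hn
      set r := (n - i) % p with hr
      have hrp : r < p := Nat.mod_lt _ hppos
      have hρn : ρ' n = ρ (i + r) := by
        simp only [hρ']; rw [if_neg hn.not_gt]
      have hwn : w' n = w (i + r) := by
        simp only [hw']; rw [if_neg hn.not_gt]
      have hn1 : ¬ n + 1 < i := by omega
      have hsub : n + 1 - i = (n - i) + 1 := by omega
      have hρn1 : ρ' (n + 1) = ρ (i + (r + 1) % p) := by
        simp only [hρ']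
        rw [if_neg hn1]
        congr 2
        have hmd := Nat.mod_add_div (n - i) p
        have hsub2 : n + 1 - i = r + 1 + p * ((n - i) / p) := by
          rw [hr]; omega
        rw [hsub2, Nat.add_mul_mod_self_left]
      rw [hρn, hwn, hρn1, key r hrp]
      exact htr (i + r)
  · -- recurrence
    intro N
    refine ⟨i + N * p, by nlinarith, ?_⟩
    have : ¬ i + N * p < i := by omega
    simp [hρ', this, Nat.add_sub_cancel_left, Nat.mul_mod_left, hirec]
  · -- ultimately periodic
    have hσne : (List.ofFn (fun t : Fin p => w (i + t))) ≠ [] := by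
      simp [List.ofFn_eq_nil_iff]; omega
    refine ⟨List.ofFn (fun t : Fin i => w t), _, hσne, ?_⟩
    funext n
    simp only [hw', extendPer, List.length_ofFn]
    by_cases hn : n < i
    · simp [hn, List.get_ofFn]
    · simp [hn, List.get_ofFn]
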